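/- Every union ultrafilter is special: if u is a union ultrafilter on 𝔽, then for every infinite set L ⊆ ℕ there exists X ∈ u such that L \ ⋃X is infinite, where ⋃X denotes the union of all members of X. -/

import Mathlib

/-- `𝔽`: the nonempty finite subsets of `ℕ`. -/
def FF : Type := {s : Finset ℕ // s.Nonempty}

/-- `FU(s)`: the set of all unions `⋃_{i∈t} s i` over nonempty finite `t ⊆ ℕ`. -/
def FU (s : ℕ → FF) : Set FF :=
  {u | ∃ t : Finset ℕ, t.Nonempty ∧ u.1 = t.biUnion fun i => (s i).1}

/-- `u` is a union ultrafilter: it has a base of `FU`-sets of pairwise disjoint sequences. -/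
def UnionUF (u : Ultrafilter FF) : Prop :=
  ∀ A ∈ u, ∃ s : ℕ → FF,
    (∀ i j, i ≠ j → Disjoint (s i).1 (s j).1) ∧ FU s ⊆ A ∧ FU s ∈ u

section UnionUFAux

open Finset

abbrev Z2 := ZMod 2

lemma z2cases : ∀ a : Z2, a = 0 ∨ a = 1 := by decide

lemma z2add_self : ∀ a : Z2, a + a = 0 := by decide

lemma zsplit : ∀ a b ja jb Aa Ab : Z2, ja + Aa = 1 → jb + Ab = 1 →
    a + b = (a * jb + ja * b) + (a * (Ab + b) + (Aa + a) * b) := by decide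

lemma zsplit2 : ∀ a b Aa Ab : Z2, a + Aa = 1 → b + Ab = 1 → a + b = a * Ab + Aa * b := by
  decide

lemma z2solve1 : ∀ x : Z2, (1 : Z2) = 1 + 1 + x → x = 1 := by decide

lemma z2solve0 : ∀ x : Z2, (0 : Z2) = 0 + 0 + x → x = 0 := by decide

lemma uTele (f : ℕ → Z2) : ∀ N, ∑ i ∈ range N, (f i + f (i + 1)) = f 0 + f N := by
  intro N
  induction N with
  | zero => simp [z2add_self]
  | succ n ih =>
      rw [Finset.sum_range_succ, ih,
        show f 0 + f n + (f n + f (n + 1)) = f 0 + (f n + f n) + f (n + 1) by ring,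
        z2add_self, add_zero]

lemma sum_stab {f : ℕ → Z2} {B N : ℕ} (hBN : B ≤ N) (h : ∀ i, B ≤ i → f i = 0) :
    ∑ i ∈ range N, f i = ∑ i ∈ range B, f i :=
  (Finset.sum_subset (range_subset_range.2 hBN) (fun i _ hi => h i (by simpa using hi))).symm

/-- indicator of `ℓ i ∈ v` in `ZMod 2`. -/
def uInd (ℓ : ℕ → ℕ) (v : Finset ℕ) (i : ℕ) : Z2 := if ℓ i ∈ v then 1 else 0

/-- indicator that both `ℓ i` and `ℓ (i+1)` belong to `v`. -/
def uE (ℓ : ℕ → ℕ) (v : Finset ℕ) (i : ℕ) : Z2 := uInd ℓ v i * uInd ℓ v (i + 1)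

/-- cross-indicator between `v` and `w` at the adjacent pair `(i, i+1)`. -/
def uX (ℓ : ℕ → ℕ) (v w : Finset ℕ) (i : ℕ) : Z2 :=
  uInd ℓ v i * uInd ℓ w (i + 1) + uInd ℓ w i * uInd ℓ v (i + 1)

def uCN (ℓ : ℕ → ℕ) (v : Finset ℕ) (N : ℕ) : Z2 := ∑ i ∈ range N, uE ℓ v i

/-- parity of the number of adjacent pairs of the enumeration `ℓ` inside `v`. -/
def uC (ℓ : ℕ → ℕ) (v : Finset ℕ) : Z2 := uCN ℓ v (v.sup id + 1)

open Classical in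
noncomputable def uAg (ℓ : ℕ → ℕ) (U : Set ℕ) (j : ℕ) : Z2 := if ℓ j ∈ U then 1 else 0

open Classical in
noncomputable def uJg (ℓ : ℕ → ℕ) (U : Set ℕ) (j : ℕ) : Z2 := if ℓ j ∈ U then 0 else 1

open Classical in
noncomputable def uBk (ℓ : ℕ → ℕ) (s : ℕ → FF) (j : ℕ) : ℕ :=
  if h : ∃ m, ℓ j ∈ (s m).1 then h.choose else 0

lemma uInd_zero {ℓ : ℕ → ℕ} (hm : StrictMono ℓ) (v : Finset ℕ) {i : ℕ}
    (hi : v.sup id < i) : uInd ℓ v i = 0 := by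
  unfold uInd
  rw [if_neg]
  intro hmem
  have h1 : i ≤ ℓ i := hm.le_apply
  have h2 : ℓ i ≤ v.sup id := Finset.le_sup (f := id) hmem
  omega

lemma uInd_union {ℓ : ℕ → ℕ} {v w : Finset ℕ} (hd : Disjoint v w) (i : ℕ) :
    uInd ℓ (v ∪ w) i = uInd ℓ v i + uInd ℓ w i := by
  unfold uInd
  by_cases hv : ℓ i ∈ v
  · rw [if_pos (mem_union_left _ hv), if_pos hv, if_neg (disjoint_left.mp hd hv), add_zero]
  · by_cases hw : ℓ i ∈ w
    · rw [if_pos (mem_union_right _ hw), if_neg hv, if_pos hw, zero_add]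
    · rw [if_neg (by simp [mem_union, hv, hw]), if_neg hv, if_neg hw, add_zero]

lemma uCN_stab {ℓ : ℕ → ℕ} (hm : StrictMono ℓ) (v : Finset ℕ) {N : ℕ}
    (hN : v.sup id + 1 ≤ N) : uCN ℓ v N = uC ℓ v := by
  unfold uC uCN
  apply sum_stab hN
  intro i hi
  unfold uE
  rw [uInd_zero hm v (by omega), zero_mul]

lemma uXN_stab {ℓ : ℕ → ℕ} (hm : StrictMono ℓ) (v w : Finset ℕ) {N N' : ℕ}
    (hN : v.sup id + 1 ≤ N) (hN' : v.sup id + 1 ≤ N') :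
    ∑ i ∈ range N, uX ℓ v w i = ∑ i ∈ range N', uX ℓ v w i := by
  have key : ∀ M, v.sup id + 1 ≤ M →
      ∑ i ∈ range M, uX ℓ v w i = ∑ i ∈ range (v.sup id + 1), uX ℓ v w i := by
    intro M hM
    apply sum_stab hM
    intro i hi
    unfold uX
    rw [uInd_zero hm v (show v.sup id < i by omega),
      uInd_zero hm v (show v.sup id < i + 1 by omega), zero_mul, mul_zero, add_zero]
  rw [key N hN, key N' hN']

lemma uCN_union {ℓ : ℕ → ℕ} {v w : Finset ℕ} (hd : Disjoint v w) (N : ℕ) :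
    uCN ℓ (v ∪ w) N = uCN ℓ v N + uCN ℓ w N + ∑ i ∈ range N, uX ℓ v w i := by
  unfold uCN
  rw [← sum_add_distrib, ← sum_add_distrib]
  apply sum_congr rfl
  intro i _
  unfold uE uX
  rw [uInd_union hd, uInd_union hd]
  ring

lemma uC_union {ℓ : ℕ → ℕ} (hm : StrictMono ℓ) {v w : Finset ℕ} (hd : Disjoint v w) :
    uC ℓ (v ∪ w) = uC ℓ v + uC ℓ w + ∑ i ∈ range ((v ∪ w).sup id + 1), uX ℓ v w i := by
  have h1 : v.sup id + 1 ≤ (v ∪ w).sup id + 1 := by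
    have := Finset.sup_mono (f := id) (subset_union_left (s₁ := v) (s₂ := w))
    omega
  have h2 : w.sup id + 1 ≤ (v ∪ w).sup id + 1 := by
    have := Finset.sup_mono (f := id) (subset_union_right (s₁ := v) (s₂ := w))
    omega
  rw [← uCN_stab hm v h1, ← uCN_stab hm w h2]
  exact uCN_union hd _

lemma FU_self (s : ℕ → FF) (m : ℕ) : s m ∈ FU s :=
  ⟨{m}, singleton_nonempty m, (singleton_biUnion).symm⟩

end UnionUFAux

open Finset in
/-- Every union ultrafilter is special. -/
theorem unionUF_special (u : Ultrafilter FF) (hu : UnionUF u) :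
    ∀ L : Set ℕ, L.Infinite →
      ∃ X ∈ u, (L \ ⋃ v ∈ X, ((v : FF).1 : Set ℕ)).Infinite := by
  classical
  intro L hL
  by_contra hcon
  push_neg at hcon
  set ℓ : ℕ → ℕ := Nat.nth (· ∈ L) with hldef
  have hm : StrictMono ℓ := Nat.nth_strictMono hL
  have hmemL : ∀ i, ℓ i ∈ L := fun i => Nat.nth_mem_of_infinite hL i
  -- Step 1: the set of `v` with even adjacency count is in `u`.
  have hS0 : {v : FF | uC ℓ v.1 = 0} ∈ u := by
    by_contra hS0
    rw [← Ultrafilter.compl_mem_iff_notMem] at hS0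
    obtain ⟨s, hdisj, hsub, hmemFU⟩ := hu _ hS0
    have hone : ∀ v, v ∈ FU s → uC ℓ v.1 = 1 := by
      intro v hv
      rcases z2cases (uC ℓ v.1) with h | h
      · exact absurd h (hsub hv)
      · exact h
    have d01 := hdisj 0 1 (by omega)
    have d02 := hdisj 0 2 (by omega)
    have d12 := hdisj 1 2 (by omega)
    set v0 := (s 0).1 with hv0
    set v1 := (s 1).1 with hv1
    set v2 := (s 2).1 with hv2
    have hne01 : (v0 ∪ v1).Nonempty := by
      obtain ⟨x, hx⟩ := (s 0).2; exact ⟨x, mem_union_left _ hx⟩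
    have hne02 : (v0 ∪ v2).Nonempty := by
      obtain ⟨x, hx⟩ := (s 0).2; exact ⟨x, mem_union_left _ hx⟩
    have hne12 : (v1 ∪ v2).Nonempty := by
      obtain ⟨x, hx⟩ := (s 1).2; exact ⟨x, mem_union_left _ hx⟩
    have hne012 : (v0 ∪ (v1 ∪ v2)).Nonempty := by
      obtain ⟨x, hx⟩ := (s 0).2; exact ⟨x, mem_union_left _ hx⟩
    have h0 : uC ℓ v0 = 1 := hone _ (FU_self s 0)
    have h1 : uC ℓ v1 = 1 := hone _ (FU_self s 1)
    have h2 : uC ℓ v2 = 1 := hone _ (FU_self s 2)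
    have h01 : uC ℓ (v0 ∪ v1) = 1 := by
      refine hone ⟨v0 ∪ v1, hne01⟩ ⟨{0, 1}, ⟨0, by simp⟩, ?_⟩
      show v0 ∪ v1 = _
      rw [biUnion_insert, singleton_biUnion]
    have h02 : uC ℓ (v0 ∪ v2) = 1 := by
      refine hone ⟨v0 ∪ v2, hne02⟩ ⟨{0, 2}, ⟨0, by simp⟩, ?_⟩
      show v0 ∪ v2 = _
      rw [biUnion_insert, singleton_biUnion]
    have h12 : uC ℓ (v1 ∪ v2) = 1 := by
      refine hone ⟨v1 ∪ v2, hne12⟩ ⟨{1, 2}, ⟨1, by simp⟩, ?_⟩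
      show v1 ∪ v2 = _
      rw [biUnion_insert, singleton_biUnion]
    have h012 : uC ℓ ((v0 ∪ v1) ∪ v2) = 1 := by
      have h := hone ⟨v0 ∪ (v1 ∪ v2), hne012⟩ ⟨{0, 1, 2}, ⟨0, by simp⟩, ?_⟩
      · rw [union_assoc]
        exact h
      · show v0 ∪ (v1 ∪ v2) = _
        rw [biUnion_insert, biUnion_insert, singleton_biUnion]
    have e02 : ∑ i ∈ range ((v0 ∪ v2).sup id + 1), uX ℓ v0 v2 i = 1 := by
      have h := uC_union hm d02
      rw [h0, h2, h02] at h
      exact z2solve1 _ h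
    have e12 : ∑ i ∈ range ((v1 ∪ v2).sup id + 1), uX ℓ v1 v2 i = 1 := by
      have h := uC_union hm d12
      rw [h1, h2, h12] at h
      exact z2solve1 _ h
    have dd : Disjoint (v0 ∪ v1) v2 := disjoint_union_left.mpr ⟨d02, d12⟩
    have h := uC_union hm dd
    rw [h01, h2, h012] at h
    have hXX : ∑ i ∈ range (((v0 ∪ v1) ∪ v2).sup id + 1), uX ℓ (v0 ∪ v1) v2 i
        = (∑ i ∈ range (((v0 ∪ v1) ∪ v2).sup id + 1), uX ℓ v0 v2 i)
          + ∑ i ∈ range (((v0 ∪ v1) ∪ v2).sup id + 1), uX ℓ v1 v2 i := by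
      rw [← sum_add_distrib]
      refine sum_congr rfl fun i _ => ?_
      unfold uX
      rw [uInd_union d01, uInd_union d01]
      ring
    have hb0 : v0.sup id + 1 ≤ (((v0 ∪ v1) ∪ v2).sup id + 1) := by
      have := Finset.sup_mono (f := id)
        ((subset_union_left (s₁ := v0) (s₂ := v1)).trans
          (subset_union_left (s₁ := v0 ∪ v1) (s₂ := v2)))
      omega
    have hb0' : v0.sup id + 1 ≤ ((v0 ∪ v2).sup id + 1) := by
      have := Finset.sup_mono (f := id) (subset_union_left (s₁ := v0) (s₂ := v2))
      omega
    have hb1 : v1.sup id + 1 ≤ (((v0 ∪ v1) ∪ v2).sup id + 1) := by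
      have := Finset.sup_mono (f := id)
        ((subset_union_right (s₁ := v0) (s₂ := v1)).trans
          (subset_union_left (s₁ := v0 ∪ v1) (s₂ := v2)))
      omega
    have hb1' : v1.sup id + 1 ≤ ((v1 ∪ v2).sup id + 1) := by
      have := Finset.sup_mono (f := id) (subset_union_left (s₁ := v1) (s₂ := v2))
      omega
    have t02 : ∑ i ∈ range (((v0 ∪ v1) ∪ v2).sup id + 1), uX ℓ v0 v2 i = 1 := by
      rw [uXN_stab hm v0 v2 hb0 hb0']
      exact e02
    have t12 : ∑ i ∈ range (((v0 ∪ v1) ∪ v2).sup id + 1), uX ℓ v1 v2 i = 1 := by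
      rw [uXN_stab hm v1 v2 hb1 hb1']
      exact e12
    rw [hXX, t02, t12] at h
    exact absurd h (by decide)
  -- Step 2: condense inside the even-parity set.
  obtain ⟨s, hdisj, hsub, hmemFU⟩ := hu _ hS0
  have hzero : ∀ v, v ∈ FU s → uC ℓ v.1 = 0 := fun v hv => hsub hv
  -- all pairwise cross-counts are even
  have hcross : ∀ m n, m ≠ n → ∀ N, (s m).1.sup id + 1 ≤ N →
      ∑ i ∈ range N, uX ℓ (s m).1 (s n).1 i = 0 := by
    intro m n hmn N hN
    have dmn := hdisj m n hmn
    have hnem : ((s m).1 ∪ (s n).1).Nonempty := by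
      obtain ⟨x, hx⟩ := (s m).2; exact ⟨x, mem_union_left _ hx⟩
    have h0 : uC ℓ (s m).1 = 0 := hzero _ (FU_self s m)
    have h1 : uC ℓ (s n).1 = 0 := hzero _ (FU_self s n)
    have h01 : uC ℓ ((s m).1 ∪ (s n).1) = 0 := by
      refine hzero ⟨(s m).1 ∪ (s n).1, hnem⟩ ⟨{m, n}, ⟨m, by simp⟩, ?_⟩
      show (s m).1 ∪ (s n).1 = _
      rw [biUnion_insert, singleton_biUnion]
    have h := uC_union hm dmn
    rw [h0, h1, h01] at h
    have hb : (s m).1.sup id + 1 ≤ ((s m).1 ∪ (s n).1).sup id + 1 := by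
      have := Finset.sup_mono (f := id) (subset_union_left (s₁ := (s m).1) (s₂ := (s n).1))
      omega
    rw [uXN_stab hm (s m).1 (s n).1 hN hb]
    exact z2solve0 _ h
  -- Step 3: the blocks cover `L` up to a finite set.
  set U : Set ℕ := ⋃ m, ((s m).1 : Set ℕ) with hUdef
  have hUmem : ∀ {j n}, ℓ j ∈ (s n).1 → ℓ j ∈ U := fun {j n} h => Set.mem_iUnion.2 ⟨n, h⟩
  have hWU : (⋃ v ∈ FU s, ((v : FF).1 : Set ℕ)) ⊆ U := by
    intro a ha
    simp only [Set.mem_iUnion] at ha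
    obtain ⟨v, hv, hav⟩ := ha
    obtain ⟨t, _, htv⟩ := hv
    rw [htv] at hav
    simp only [Finset.coe_biUnion, Set.mem_iUnion, Finset.mem_coe] at hav
    obtain ⟨i, _, hai⟩ := hav
    exact Set.mem_iUnion.2 ⟨i, hai⟩
  have hGfin : {i : ℕ | ℓ i ∉ U}.Finite := by
    have h1 := hcon (FU s) hmemFU
    have h2 : (L \ U).Finite := by
      apply h1.subset
      intro a ha
      exact ⟨ha.1, fun h => ha.2 (hWU h)⟩
    have h3 : {i : ℕ | ℓ i ∉ U} ⊆ ℓ ⁻¹' (L \ U) := fun i hi => ⟨hmemL i, hi⟩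
    exact ((h2.preimage hm.injective.injOn).subset h3)
  obtain ⟨NG, hNG⟩ : ∃ NG, ∀ i, NG ≤ i → ℓ i ∈ U := by
    obtain ⟨b, hb⟩ := hGfin.bddAbove
    refine ⟨b + 1, fun i hi => ?_⟩
    by_contra h
    have := hb (show i ∈ {i : ℕ | ℓ i ∉ U} from h)
    omega
  -- block-selector function
  have hbk : ∀ j, ℓ j ∈ U → ℓ j ∈ (s (uBk ℓ s j)).1 := by
    intro j hj
    have hj' : ∃ m, ℓ j ∈ (s m).1 := by
      rw [hUdef] at hj
      simpa [Set.mem_iUnion] using hj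
    unfold uBk
    rw [dif_pos hj']
    exact hj'.choose_spec
  have hbku : ∀ j n, ℓ j ∈ (s n).1 → n = uBk ℓ s j := by
    intro j n hn
    by_contra hne
    exact (Finset.disjoint_left.mp (hdisj n _ hne) hn) (hbk j (hUmem hn))
  have hJA : ∀ j, uJg ℓ U j + uAg ℓ U j = 1 := by
    intro j
    by_cases h : ℓ j ∈ U <;> simp [uJg, uAg, h]
  have hJg0 : ∀ j, NG ≤ j → uJg ℓ U j = 0 := fun j hj => by simp [uJg, hNG j hj]
  have hcover : ∀ (F : Finset ℕ) (j : ℕ), uBk ℓ s j ∈ F →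
      uAg ℓ U j = ∑ n ∈ F, uInd ℓ (s n).1 j := by
    intro F j hbkF
    by_cases hj : ℓ j ∈ U
    · have hmain : uInd ℓ (s (uBk ℓ s j)).1 j = 1 := by
        unfold uInd
        rw [if_pos (hbk j hj)]
      have hside : ∀ n ∈ F, n ≠ uBk ℓ s j → uInd ℓ (s n).1 j = 0 := by
        intro n _ hne
        unfold uInd
        rw [if_neg (fun hmem => hne (hbku j n hmem))]
      rw [Finset.sum_eq_single_of_mem _ hbkF hside, hmain]
      unfold uAg
      rw [if_pos hj]
    · have : ∀ n ∈ F, uInd ℓ (s n).1 j = 0 := by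
        intro n _
        unfold uInd
        rw [if_neg (fun hmem => hj (hUmem hmem))]
      rw [Finset.sum_eq_zero this]
      unfold uAg
      rw [if_neg hj]
  -- Step 4: per-block identity
  have hperm : ∀ m, ∑ i ∈ range NG,
      (uInd ℓ (s m).1 i * uJg ℓ U (i + 1) + uJg ℓ U i * uInd ℓ (s m).1 (i + 1))
      = uInd ℓ (s m).1 0 := by
    intro m
    set N := max NG ((s m).1.sup id + 1) with hNdef
    have hN1 : NG ≤ N := le_max_left _ _
    have hN2 : (s m).1.sup id + 1 ≤ N := le_max_right _ _
    set F : Finset ℕ := ((range (N + 1)).image (uBk ℓ s)) ∪ {m} with hFdef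
    have hmF : m ∈ F := mem_union_right _ (mem_singleton_self m)
    have hbkF : ∀ j, j ≤ N → uBk ℓ s j ∈ F := fun j hj =>
      mem_union_left _ (mem_image_of_mem _ (mem_range.2 (by omega)))
    have hOB : ∀ j, j ≤ N →
        uAg ℓ U j + uInd ℓ (s m).1 j = ∑ n ∈ F.erase m, uInd ℓ (s n).1 j := by
      intro j hj
      rw [hcover F j (hbkF j hj), ← Finset.add_sum_erase F _ hmF, add_right_comm,
        z2add_self, zero_add]
    have htel : ∑ i ∈ range N, (uInd ℓ (s m).1 i + uInd ℓ (s m).1 (i + 1))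
        = uInd ℓ (s m).1 0 := by
      rw [uTele, uInd_zero hm _ (show (s m).1.sup id < N by omega), add_zero]
    have hsplit : ∑ i ∈ range N, (uInd ℓ (s m).1 i + uInd ℓ (s m).1 (i + 1))
        = (∑ i ∈ range N,
            (uInd ℓ (s m).1 i * uJg ℓ U (i + 1) + uJg ℓ U i * uInd ℓ (s m).1 (i + 1)))
          + ∑ i ∈ range N,
            (uInd ℓ (s m).1 i * (uAg ℓ U (i + 1) + uInd ℓ (s m).1 (i + 1))
              + (uAg ℓ U i + uInd ℓ (s m).1 i) * uInd ℓ (s m).1 (i + 1)) := by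
      rw [← sum_add_distrib]
      exact sum_congr rfl fun i _ => zsplit _ _ _ _ _ _ (hJA i) (hJA (i + 1))
    have hXO : ∑ i ∈ range N,
        (uInd ℓ (s m).1 i * (uAg ℓ U (i + 1) + uInd ℓ (s m).1 (i + 1))
          + (uAg ℓ U i + uInd ℓ (s m).1 i) * uInd ℓ (s m).1 (i + 1)) = 0 := by
      have hrw : ∀ i ∈ range N,
          uInd ℓ (s m).1 i * (uAg ℓ U (i + 1) + uInd ℓ (s m).1 (i + 1))
            + (uAg ℓ U i + uInd ℓ (s m).1 i) * uInd ℓ (s m).1 (i + 1)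
          = ∑ n ∈ F.erase m, uX ℓ (s m).1 (s n).1 i := by
        intro i hi
        have hi' := mem_range.mp hi
        rw [hOB (i + 1) (by omega), hOB i (by omega), Finset.mul_sum, Finset.sum_mul,
          ← sum_add_distrib]
        exact sum_congr rfl fun n _ => rfl
      rw [sum_congr rfl hrw, sum_comm]
      exact Finset.sum_eq_zero fun n hn =>
        hcross m n (fun h => (Finset.ne_of_mem_erase hn) h.symm) N hN2
    have hXJ : ∑ i ∈ range N,
        (uInd ℓ (s m).1 i * uJg ℓ U (i + 1) + uJg ℓ U i * uInd ℓ (s m).1 (i + 1))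
        = uInd ℓ (s m).1 0 := by
      rw [hsplit, hXO, add_zero] at htel
      exact htel
    have hres : ∑ i ∈ range N,
        (uInd ℓ (s m).1 i * uJg ℓ U (i + 1) + uJg ℓ U i * uInd ℓ (s m).1 (i + 1))
        = ∑ i ∈ range NG,
        (uInd ℓ (s m).1 i * uJg ℓ U (i + 1) + uJg ℓ U i * uInd ℓ (s m).1 (i + 1)) := by
      apply sum_stab hN1
      intro i hi
      rw [hJg0 (i + 1) (by omega), hJg0 i (by omega), mul_zero, zero_mul, add_zero]
    rw [← hres]
    exact hXJ
  -- Step 5: global identity and contradiction.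
  have hgtel : ∑ i ∈ range NG, (uJg ℓ U i + uJg ℓ U (i + 1)) = uJg ℓ U 0 := by
    rw [uTele, hJg0 NG le_rfl, add_zero]
  set F2 : Finset ℕ := (range (NG + 1)).image (uBk ℓ s) with hF2def
  have hbkF2 : ∀ j, j ≤ NG → uBk ℓ s j ∈ F2 := fun j hj =>
    mem_image_of_mem _ (mem_range.2 (by omega))
  have hptw : ∀ i ∈ range NG, uJg ℓ U i + uJg ℓ U (i + 1)
      = ∑ n ∈ F2, (uInd ℓ (s n).1 i * uJg ℓ U (i + 1) + uJg ℓ U i * uInd ℓ (s n).1 (i + 1)) := by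
    intro i hi
    have hi' := mem_range.mp hi
    rw [zsplit2 _ _ _ _ (hJA i) (hJA (i + 1)),
      hcover F2 i (hbkF2 i (by omega)), hcover F2 (i + 1) (hbkF2 (i + 1) (by omega)),
      Finset.mul_sum, Finset.sum_mul, ← sum_add_distrib]
    exact sum_congr rfl fun n _ => by ring
  have hglob : uJg ℓ U 0 = ∑ n ∈ F2, uInd ℓ (s n).1 0 := by
    rw [← hgtel, sum_congr rfl hptw, sum_comm]
    exact sum_congr rfl fun n _ => hperm n
  have hA0 : uAg ℓ U 0 = ∑ n ∈ F2, uInd ℓ (s n).1 0 := hcover F2 0 (hbkF2 0 (by omega))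
  have hfinal := hJA 0
  rw [show uJg ℓ U 0 = uAg ℓ U 0 by rw [hglob, hA0], z2add_self] at hfinal
  exact absurd hfinal (by decide)
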